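/- arXiv:1612.05002 — 4 statements merged into one kernel-verified Lean document; each statement's English description precedes it below -/
import Mathlib

section
/- Let L be a frame, X a poset, and B : J(L) → X a monotone map from the join-irreducibles of L to X. Define τ⁻¹(B) : X → L by τ⁻¹(B)(x) = ⨆ {ℓ ∈ J(L) | B(ℓ) ≤ x}. Then τ⁻¹(B) is monotone, and for all x ∈ X and ℓ ∈ J(L): ℓ ≤ τ⁻¹(B)(x) if and only if B(ℓ) ≤ x. -/
/-- An element of a complete lattice is completely join-irreducible if
`ℓ = ⨆ S` implies `ℓ ∈ S`. -/
def CJIrr {L : Type*} [CompleteLattice L] (ℓ : L) : Prop :=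
  ∀ S : Set L, ℓ = sSup S → ℓ ∈ S

/-- For a monotone `B : J(L) → X`, the map `τ⁻¹(B)(x) = ⨆ {ℓ ∈ J(L) | B ℓ ≤ x}`
is monotone, and `ℓ ≤ τ⁻¹(B)(x) ↔ B ℓ ≤ x` for join-irreducible `ℓ`. -/
theorem stmt2 {L X : Type*} [Order.Frame L] [PartialOrder X]
    (B : L → X)
    (hB : ∀ ℓ ℓ' : L, CJIrr ℓ → CJIrr ℓ' → ℓ ≤ ℓ' → B ℓ ≤ B ℓ') :
    Monotone (fun x : X => sSup {ℓ : L | CJIrr ℓ ∧ B ℓ ≤ x}) ∧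
    ∀ (x : X) (ℓ : L), CJIrr ℓ →
      (ℓ ≤ sSup {ℓ' : L | CJIrr ℓ' ∧ B ℓ' ≤ x} ↔ B ℓ ≤ x) := by
  constructor
  · intro x y hxy
    exact sSup_le_sSup fun ℓ hℓ => ⟨hℓ.1, hℓ.2.trans hxy⟩
  · intro x ℓ hℓ
    constructor
    · intro h
      set S : Set L := {ℓ' : L | CJIrr ℓ' ∧ B ℓ' ≤ x}
      have heq : ℓ = sSup ((fun s => ℓ ⊓ s) '' S) := by
        rw [sSup_image, ← inf_sSup_eq]
        exact (inf_eq_left.mpr h).symm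
      obtain ⟨s, hs, hse⟩ := hℓ _ heq
      have hle : ℓ ≤ s := by rw [← hse]; exact inf_le_right
      exact (hB ℓ s hℓ hs.1 hle).trans hs.2
    · intro h
      exact le_sSup ⟨hℓ, h⟩
end

section
/- Let L be a frame, X a poset, and B : J(L) → X monotone. Then for every join-irreducible ℓ ∈ L, the set {x ∈ X | ℓ ≤ τ⁻¹(B)(x)} has minimum B(ℓ), where τ⁻¹(B)(x) = ⨆ {ℓ' ∈ J(L) | B(ℓ') ≤ x}. -/
/-- For a monotone `B : J(L) → X`, the set `{x | ℓ ≤ τ⁻¹(B)(x)}` has minimum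
`B ℓ` for every join-irreducible `ℓ`, where `τ⁻¹(B)(x) = ⨆ {ℓ' ∈ J(L) | B ℓ' ≤ x}`. -/
theorem stmt3 {L X : Type*} [Order.Frame L] [PartialOrder X]
    (B : L → X)
    (hB : ∀ ℓ ℓ' : L, CJIrr ℓ → CJIrr ℓ' → ℓ ≤ ℓ' → B ℓ ≤ B ℓ') :
    ∀ ℓ : L, CJIrr ℓ →
      IsLeast {x : X | ℓ ≤ sSup {ℓ' : L | CJIrr ℓ' ∧ B ℓ' ≤ x}} (B ℓ) := by
  intro ℓ hℓ
  constructor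
  · exact le_sSup ⟨hℓ, le_rfl⟩
  · intro x hx
    have h : ℓ = sSup ((fun s => ℓ ⊓ s) '' {ℓ' : L | CJIrr ℓ' ∧ B ℓ' ≤ x}) := by
      rw [sSup_image, ← inf_sSup_eq]
      exact (inf_eq_left.mpr hx).symm
    obtain ⟨s, ⟨hs, hBs⟩, hls⟩ := hℓ _ h
    have : ℓ ≤ s := by rw [← hls]; exact inf_le_right
    exact le_trans (hB ℓ s hℓ hs this) hBs
end

section
/- Let L be a frame, X a poset, and h ∈ ((X → L)* → L)* (i.e. a monotone map from (X → L)* to L, with (X → L)* ordered by reversed pointwise order, satisfying the minimum condition). Then for every join-irreducible ℓ ∈ L and x ∈ X: ℓ ≤ ⨆_{b ∈ (X → L)*} (h(b) ⊓ b(x)) if and only if ℓ ≤ τ(h)(ℓ)(x), where τ(h)(ℓ) = min {b ∈ (X → L)* | ℓ ≤ h(b)}. -/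
/-- Membership in `(X → L)*`: `b` is monotone and for each completely
join-irreducible `ℓ`, the set `{x | ℓ ≤ b x}` has a minimum. -/
def StarPred {X L : Type*} [PartialOrder X] [Order.Frame L] (b : X → L) : Prop :=
  Monotone b ∧ ∀ ℓ : L, CJIrr ℓ → ∃ m, IsLeast {x : X | ℓ ≤ b x} m

/-- For `h ∈ ((X → L)* → L)*` (monotone w.r.t. the reversed pointwise order on
`(X → L)*`, with minima `τh ℓ = min {b | ℓ ≤ h b}` existing), one has
`ℓ ≤ ⨆_{b ∈ (X→L)*} (h b ⊓ b x) ↔ ℓ ≤ τh ℓ x` for join-irreducible `ℓ`. -/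
theorem stmt8 {X L : Type*} [PartialOrder X] [Order.Frame L]
    (h : (X → L) → L)
    (hmono : ∀ b c : X → L, StarPred b → StarPred c →
      (∀ x : X, c x ≤ b x) → h b ≤ h c)
    (τh : L → (X → L))
    (hτh : ∀ ℓ : L, CJIrr ℓ →
      StarPred (τh ℓ) ∧ ℓ ≤ h (τh ℓ) ∧
      ∀ c : X → L, StarPred c → ℓ ≤ h c → ∀ x : X, c x ≤ τh ℓ x) :
    ∀ (ℓ : L) (x : X), CJIrr ℓ →
      (ℓ ≤ sSup {v : L | ∃ b : X → L, StarPred b ∧ v = h b ⊓ b x} ↔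
        ℓ ≤ τh ℓ x) := by
  intro ℓ x hcji
  obtain ⟨hstar, hle, hmin⟩ := hτh ℓ hcji
  constructor
  · intro hsup
    set S : Set L := {v : L | ∃ b : X → L, StarPred b ∧ v = h b ⊓ b x} with hS
    have key : ℓ = sSup ((fun v => ℓ ⊓ v) '' S) := by
      rw [sSup_image]
      rw [← inf_sSup_eq]
      exact (inf_eq_left.mpr hsup).symm
    have := hcji _ key
    obtain ⟨v, ⟨b, hb, hv⟩, hℓ⟩ := this
    subst hv
    have h1 : ℓ ≤ h b := by
      rw [← hℓ]; exact inf_le_right.trans inf_le_left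
    have h2 : ℓ ≤ b x := by
      rw [← hℓ]; exact inf_le_right.trans inf_le_right
    exact h2.trans (hmin b hb h1 x)
  · intro hx
    have : h (τh ℓ) ⊓ τh ℓ x ∈ {v : L | ∃ b : X → L, StarPred b ∧ v = h b ⊓ b x} :=
      ⟨τh ℓ, hstar, rfl⟩
    exact le_trans (le_inf hle hx) (le_sSup this)
end

section
/- Consider the poset Φ = {φ', φ} with φ' ≤ φ, the discrete two-element state set X = {x₁, x₂}, and the CTS α : X → (D P X)^Φ given by α(x₂)(φ') = {x₂} and α(−)(−) = ∅ otherwise. Then x₁ and x₂ are not conditionally bisimilar at condition φ: there is no family of relations (R_ψ)_{ψ ∈ Φ} with R_φ ⊆ R_{φ'}, each R_ψ a bisimulation for the transition system α(−)(ψ), and (x₁, x₂) ∈ R_φ. -/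
/-- `R` is a (strong) bisimulation for the transition system `t`. -/
def IsBisim {X : Type*} (t : X → Set X) (R : Set (X × X)) : Prop :=
  ∀ x y : X, (x, y) ∈ R →
    (∀ x' ∈ t x, ∃ y' ∈ t y, (x', y') ∈ R) ∧
    (∀ y' ∈ t y, ∃ x' ∈ t x, (x', y') ∈ R)

/-- The CTS over conditions `Φ = {φ' ≤ φ}` (encoded as `Fin 2`, `φ' = 0`,
`φ = 1`) on states `X = {x₁, x₂}` (encoded as `Fin 2`, `x₁ = 0`, `x₂ = 1`)
with the single transition `x₂ →(φ') x₂`. -/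
def ctsAlpha : Fin 2 → Fin 2 → Set (Fin 2) := fun x φ =>
  if x = 1 ∧ φ = 0 then {1} else ∅

/-- `x₁` and `x₂` are not conditionally bisimilar at condition `φ`: there is
no family `(R_ψ)` of bisimulations for the instantiations `ctsAlpha (−)(ψ)`
with `R_φ ⊆ R_{φ'}` for `φ' ≤ φ` and `(x₁, x₂) ∈ R_φ`. -/
theorem stmt17 :
    ¬ ∃ R : Fin 2 → Set (Fin 2 × Fin 2),
        (∀ ψ χ : Fin 2, ψ ≤ χ → R χ ⊆ R ψ) ∧
        (∀ ψ : Fin 2, IsBisim (fun x => ctsAlpha x ψ) (R ψ)) ∧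
        ((0 : Fin 2), (1 : Fin 2)) ∈ R 1 := by
  rintro ⟨R, hmono, hbis, hmem⟩
  have h0 : ((0:Fin 2), (1:Fin 2)) ∈ R 0 := hmono 0 1 (by decide) hmem
  obtain ⟨-, h⟩ := hbis 0 0 1 h0
  obtain ⟨x', hx', -⟩ := h 1 (by simp [ctsAlpha])
  simp [ctsAlpha] at hx'
end
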